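/- Let S be a collection of strings and G(S) the complete weighted graph on vertex set S where the weight of edge {x,y} is max(|overlap(x,y)|, |overlap(y,x)|). If μ(S) denotes the maximum weight of a matching in G(S), then S has a superstring of length at most (Σ_{x∈S}|x|) − μ(S). -/

import Mathlib

open List

/-- The length of the longest suffix of `s` that is also a prefix of `t`. -/
def ovLen {α : Type*} [DecidableEq α] (s t : List α) : ℕ :=
  Nat.findGreatest (fun i => s.drop (s.length - i) = t.take i) (min s.length t.length)

/-- The weight of a pair of positions of `S` in the overlap graph `G(S)`:
`w({x,y}) = max(|overlap(x,y)|, |overlap(y,x)|)`. -/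
def pairWeight {α : Type*} [DecidableEq α] (S : List (List α)) (p : ℕ × ℕ) : ℕ :=
  max (ovLen (S.getD p.1 []) (S.getD p.2 [])) (ovLen (S.getD p.2 []) (S.getD p.1 []))

/-- A matching in the overlap graph `G(S)`: a set of pairs of positions of `S` with
pairwise distinct endpoints. -/
def IsMatching {α : Type*} (S : List (List α)) (M : Finset (ℕ × ℕ)) : Prop :=
  (∀ p ∈ M, p.1 < p.2 ∧ p.2 < S.length) ∧
    ∀ p ∈ M, ∀ q ∈ M, p ≠ q → p.1 ≠ q.1 ∧ p.1 ≠ q.2 ∧ p.2 ≠ q.1 ∧ p.2 ≠ q.2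

/-- `mu S` is the maximum weight of a matching in the overlap graph `G(S)`. -/
noncomputable def mu {α : Type*} [DecidableEq α] (S : List (List α)) : ℕ :=
  sSup { t | ∃ M : Finset (ℕ × ℕ), IsMatching S M ∧ t = ∑ p ∈ M, pairWeight S p }

def mergeOv {α : Type*} [DecidableEq α] (s t : List α) : List α :=
  s ++ t.drop (ovLen s t)

lemma ovLen_le_left {α : Type*} [DecidableEq α] (s t : List α) : ovLen s t ≤ s.length :=
  le_trans (Nat.findGreatest_le _) (min_le_left _ _)

lemma ovLen_le_right {α : Type*} [DecidableEq α] (s t : List α) : ovLen s t ≤ t.length :=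
  le_trans (Nat.findGreatest_le _) (min_le_right _ _)

lemma ovLen_spec {α : Type*} [DecidableEq α] (s t : List α) :
    s.drop (s.length - ovLen s t) = t.take (ovLen s t) := by
  have : s.drop (s.length - 0) = t.take 0 := by simp
  exact Nat.findGreatest_spec (P := fun i => s.drop (s.length - i) = t.take i)
    (Nat.zero_le _) this

lemma prefix_mergeOv {α : Type*} [DecidableEq α] (s t : List α) : s <+: mergeOv s t :=
  ⟨_, rfl⟩

lemma suffix_mergeOv {α : Type*} [DecidableEq α] (s t : List α) : t <:+ mergeOv s t := by
  refine ⟨s.take (s.length - ovLen s t), ?_⟩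
  have h1 : s.take (s.length - ovLen s t) ++ s.drop (s.length - ovLen s t) = s :=
    List.take_append_drop _ _
  have h2 := ovLen_spec s t
  have h3 : t.take (ovLen s t) ++ t.drop (ovLen s t) = t := List.take_append_drop _ _
  calc s.take (s.length - ovLen s t) ++ t
      = s.take (s.length - ovLen s t) ++ (t.take (ovLen s t) ++ t.drop (ovLen s t)) := by rw [h3]
    _ = (s.take (s.length - ovLen s t) ++ s.drop (s.length - ovLen s t)) ++ t.drop (ovLen s t) := by
        rw [h2, List.append_assoc]
    _ = mergeOv s t := by rw [h1]; rfl

lemma length_mergeOv {α : Type*} [DecidableEq α] (s t : List α) :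
    (mergeOv s t).length + ovLen s t = s.length + t.length := by
  have h := ovLen_le_right s t
  simp only [mergeOv, List.length_append, List.length_drop]
  omega

lemma join_superstring {α : Type*} [DecidableEq α] (S : List (List α)) (T : Finset ℕ) :
    ∃ s : List α, (∀ i ∈ T, S.getD i [] <:+: s) ∧
      s.length ≤ ∑ i ∈ T, (S.getD i []).length := by
  classical
  refine Finset.induction_on T ⟨[], by simp, by simp⟩ ?_
  intro a T' hi ih
  · obtain ⟨s', hs', hl⟩ := ih
    refine ⟨S.getD a [] ++ s', ?_, ?_⟩
    · intro i hiT
      rcases Finset.mem_insert.mp hiT with rfl | h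
      · exact (List.prefix_append _ _).isInfix
      · exact (hs' i h).trans ((List.suffix_append _ _).isInfix)
    · rw [Finset.sum_insert hi]
      simp only [List.length_append]
      omega

lemma key {α : Type*} [DecidableEq α] (S : List (List α)) :
    ∀ M : Finset (ℕ × ℕ), IsMatching S M → ∀ T : Finset ℕ,
      (∀ p ∈ M, p.1 ∈ T ∧ p.2 ∈ T) →
      ∃ s : List α, (∀ i ∈ T, S.getD i [] <:+: s) ∧
        s.length + ∑ p ∈ M, pairWeight S p ≤ ∑ i ∈ T, (S.getD i []).length := by
  intro M
  induction M using Finset.induction with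
  | empty =>
    intro _ T _
    obtain ⟨s, h1, h2⟩ := join_superstring S T
    exact ⟨s, h1, by simpa using h2⟩
  | insert p M' hp ih =>
    intro hM T hT
    have hpM : p ∈ insert p M' := Finset.mem_insert_self _ _
    have hab : p.1 < p.2 := (hM.1 p hpM).1
    have hM' : IsMatching S M' := by
      constructor
      · intro q hq; exact hM.1 q (Finset.mem_insert_of_mem hq)
      · intro q hq r hr hqr
        exact hM.2 q (Finset.mem_insert_of_mem hq) r (Finset.mem_insert_of_mem hr) hqr
    set a := p.1; set b := p.2
    set T' := (T.erase a).erase b with hT'def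
    have hTa : a ∈ T := (hT p hpM).1
    have hTb : b ∈ T := (hT p hpM).2
    have hne : a ≠ b := Nat.ne_of_lt hab
    have hT'sub : ∀ q ∈ M', q.1 ∈ T' ∧ q.2 ∈ T' := by
      intro q hq
      have hqp : p ≠ q := by rintro rfl; exact hp hq
      have hd := hM.2 p hpM q (Finset.mem_insert_of_mem hq) hqp
      have hq1 := (hT q (Finset.mem_insert_of_mem hq)).1
      have hq2 := (hT q (Finset.mem_insert_of_mem hq)).2
      constructor
      · exact Finset.mem_erase.mpr ⟨fun h => hd.2.2.1 h.symm,
          Finset.mem_erase.mpr ⟨fun h => hd.1 h.symm, hq1⟩⟩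
      · exact Finset.mem_erase.mpr ⟨fun h => hd.2.2.2 h.symm,
          Finset.mem_erase.mpr ⟨fun h => hd.2.1 h.symm, hq2⟩⟩
    obtain ⟨s', hs'1, hs'2⟩ := ih hM' T' hT'sub
    set x := S.getD a ([] : List α) with hx
    set y := S.getD b ([] : List α) with hy
    -- choose orientation achieving the max
    obtain ⟨u, v, hu, hv, hlen⟩ :
        ∃ u v : List α, (x <:+: mergeOv u v) ∧ (y <:+: mergeOv u v) ∧
          (mergeOv u v).length + pairWeight S p = x.length + y.length := by
      rcases le_total (ovLen y x) (ovLen x y) with h | h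
      · refine ⟨x, y, (prefix_mergeOv x y).isInfix, (suffix_mergeOv x y).isInfix, ?_⟩
        have : pairWeight S p = ovLen x y := by
          show max (ovLen x y) (ovLen y x) = _; omega
        rw [this]; exact length_mergeOv x y
      · refine ⟨y, x, (suffix_mergeOv y x).isInfix, (prefix_mergeOv y x).isInfix, ?_⟩
        have : pairWeight S p = ovLen y x := by
          show max (ovLen x y) (ovLen y x) = _; omega
        rw [this, length_mergeOv y x]; omega
    refine ⟨mergeOv u v ++ s', ?_, ?_⟩
    · intro i hi
      by_cases h1 : i = a
      · subst h1; exact hu.trans (List.prefix_append _ _).isInfix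
      by_cases h2 : i = b
      · subst h2; exact hv.trans (List.prefix_append _ _).isInfix
      · have : i ∈ T' := Finset.mem_erase.mpr ⟨h2, Finset.mem_erase.mpr ⟨h1, hi⟩⟩
        exact (hs'1 i this).trans (List.suffix_append _ _).isInfix
    · have hsum : ∑ i ∈ T, (S.getD i []).length
          = x.length + (y.length + ∑ i ∈ T', (S.getD i []).length) := by
        rw [← Finset.add_sum_erase _ _ hTa,
            ← Finset.add_sum_erase _ _ (Finset.mem_erase.mpr ⟨Ne.symm hne, hTb⟩)]
      rw [Finset.sum_insert hp, hsum]
      simp only [List.length_append]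
      omega

lemma sumLen {α : Type*} (S : List (List α)) :
    ∑ i ∈ Finset.range S.length, (S.getD i []).length = (S.map List.length).sum := by
  induction S with
  | nil => simp
  | cons h t ih =>
    simp only [List.length_cons, List.map_cons, List.sum_cons]
    rw [Finset.sum_range_succ']
    simp only [List.getD_cons_succ, List.getD_cons_zero, ih]
    omega

/-- S has a superstring. -/
theorem superstring_below_matching {α : Type*} [DecidableEq α] (S : List (List α)) :
    ∃ s : List α, (∀ x ∈ S, x <:+: s) ∧
      s.length + mu S ≤ (S.map List.length).sum := by
  have hne : Set.Nonempty { t | ∃ M : Finset (ℕ × ℕ), IsMatching S M ∧ t = ∑ p ∈ M, pairWeight S p } := ⟨0, ∅, ⟨by simp, by simp⟩, by simp⟩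
  have hbdd : BddAbove { t | ∃ M : Finset (ℕ × ℕ), IsMatching S M ∧ t = ∑ p ∈ M, pairWeight S p } := by
    refine ⟨(S.map List.length).sum, ?_⟩
    rintro t ⟨M, hM, rfl⟩
    have hT : ∀ p ∈ M, p.1 ∈ Finset.range S.length ∧ p.2 ∈ Finset.range S.length := by
      intro q hq
      have := hM.1 q hq
      exact ⟨Finset.mem_range.mpr (lt_trans this.1 this.2), Finset.mem_range.mpr this.2⟩
    obtain ⟨s, _, h2⟩ := key S M hM (Finset.range S.length) hT
    rw [sumLen] at h2
    omega
  have hmem : mu S ∈ { t | ∃ M : Finset (ℕ × ℕ), IsMatching S M ∧ t = ∑ p ∈ M, pairWeight S p } :=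
    Nat.sSup_mem hne hbdd
  obtain ⟨M, hM, hMsum⟩ := hmem
  have hT : ∀ p ∈ M, p.1 ∈ Finset.range S.length ∧ p.2 ∈ Finset.range S.length := by
    intro q hq
    have := hM.1 q hq
    exact ⟨Finset.mem_range.mpr (lt_trans this.1 this.2), Finset.mem_range.mpr this.2⟩
  obtain ⟨s, h1, h2⟩ := key S M hM (Finset.range S.length) hT
  rw [sumLen] at h2
  refine ⟨s, ?_, by rw [hMsum]; exact h2⟩
  intro x hx
  obtain ⟨i, hi, rfl⟩ := List.mem_iff_getElem.mp hx
  have := h1 i (Finset.mem_range.mpr hi)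
  rwa [List.getD_eq_getElem S [] hi] at this
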